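/- Let n ≥ 2 and let d : Fin n → ℝ be a function with Σ_k d k = 0 that is not identically constant (i.e. there exist i, j with d i ≠ d j). In Matrix (Fin n) (Fin n) ℂ, regarded as a Lie algebra over ℝ with bracket ⁅A, B⁆ = A·B − B·A, consider the generating set 𝒢 consisting of the matrices i·(E_{kl} + E_{lk}) for all pairs k < l (where E_{kl} denotes the standard basis matrix with a single 1 in position (k, l)), together with the matrix i·diag(d) (the diagonal matrix with entries i·d k). Then the real Lie subalgebra generated by 𝒢 equals su(n) = {A : Matrix (Fin n) (Fin n) ℂ | Aᴴ = −A and trace A = 0}, the set of traceless skew-Hermitian n×n complex matrices. -/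

import Mathlib

open Matrix

attribute [local instance] LieRing.ofAssociativeRing

namespace XYgenAux

variable {n : ℕ}

noncomputable abbrev E (k l : Fin n) : Matrix (Fin n) (Fin n) ℂ := Matrix.single k l 1

lemma real_smul_mat (r : ℝ) (M : Matrix (Fin n) (Fin n) ℂ) : r • M = (r : ℂ) • M := by
  ext i j; simp [Complex.real_smul]

lemma conjT_E (k l : Fin n) : (E k l)ᴴ = E l k := by
  ext i j
  simp only [conjTranspose_apply, Matrix.single, of_apply]
  split_ifs with h1 h2 h2 <;> simp_all

lemma diag_mul_E (f : Fin n → ℂ) (k l : Fin n) :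
    Matrix.diagonal f * E k l = f k • E k l := by
  ext i j
  rw [diagonal_mul]
  simp [Matrix.single, of_apply, smul_ite]
  split_ifs with h <;> simp_all

lemma E_mul_diag (f : Fin n → ℂ) (k l : Fin n) :
    E k l * Matrix.diagonal f = f l • E k l := by
  ext i j
  rw [mul_diagonal]
  simp [Matrix.single, of_apply, smul_ite]
  split_ifs with h <;> simp_all [mul_comm]

lemma E_mul_E (k l l' m : Fin n) :
    E k l * E l' m = if l = l' then E k m else 0 := by
  split_ifs with h
  · subst h; simpa using single_mul_single_same (c := (1:ℂ)) k l m 1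
  · exact single_mul_single_of_ne (c := (1:ℂ)) k l l' h 1

lemma brk_d (d : Fin n → ℝ) (k l : Fin n) :
    ⁅Complex.I • Matrix.diagonal (fun k => (d k : ℂ)), Complex.I • (E k l + E l k)⁆
      = (d l - d k : ℝ) • (E k l - E l k) := by
  rw [Ring.lie_def, real_smul_mat]
  simp only [smul_mul_assoc, mul_smul_comm, mul_add, add_mul, diag_mul_E, E_mul_diag,
    smul_smul]
  push_cast
  match_scalars <;> (try (ring_nf; rw [Complex.I_sq])) <;> ring

lemma brk_SS {k l m : Fin n} (hkl : k ≠ l) (hkm : k ≠ m) (hml : m ≠ l) :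
    ⁅Complex.I • (E k m + E m k), Complex.I • (E m l + E l m)⁆ = -(E k l - E l k) := by
  rw [Ring.lie_def]
  simp only [smul_mul_assoc, mul_smul_comm, mul_add, add_mul, E_mul_E, smul_smul,
    if_pos rfl, if_neg hml, if_neg hkm, if_neg hkl, if_neg hkl.symm,
    if_neg hkm.symm, if_neg hml.symm]
  simp only [if_true, add_zero, zero_add, smul_zero, smul_smul, Complex.I_mul_I]
  module

lemma brk_AS {k l : Fin n} (hkl : k ≠ l) :
    ⁅E k l - E l k, Complex.I • (E k l + E l k)⁆ = (2:ℝ) • (Complex.I • (E k k - E l l)) := by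
  rw [Ring.lie_def]
  simp only [smul_mul_assoc, mul_smul_comm, mul_add, add_mul, sub_mul, mul_sub, E_mul_E,
    smul_smul, if_pos rfl, if_neg hkl, if_neg hkl.symm]
  simp only [if_true, add_zero, zero_add, smul_zero, zero_sub, sub_zero, smul_smul,
    Complex.I_mul_I, real_smul_mat]
  match_scalars <;> (try (ring_nf; rw [Complex.I_sq])) <;> ring

lemma sum_E_diag : (∑ l : Fin n, E l l) = (1 : Matrix (Fin n) (Fin n) ℂ) := by
  ext i j
  rw [Matrix.sum_apply]
  by_cases h : i = j
  · subst h
    rw [Finset.sum_eq_single i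
      (fun b _ hb => single_apply_of_ne b b 1 i i (by tauto)) (by simp)]
    simp [one_apply]
  · rw [Finset.sum_eq_zero, one_apply_ne h]
    intro b _
    exact single_apply_of_ne b b 1 i j (fun ⟨h1, h2⟩ => h (h1 ▸ h2 ▸ rfl))

lemma skew_sum (c : Fin n → Fin n → ℝ) :
    ∑ k, ∑ l, c k l • (E k l - E l k) = ∑ k, ∑ l, ((c k l - c l k) : ℝ) • E k l := by
  have h1 : ∑ k, ∑ l, c k l • (E k l - E l k)
      = (∑ k, ∑ l, c k l • E k l) - (∑ k, ∑ l, c k l • E l k) := by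
    simp [smul_sub, Finset.sum_sub_distrib]
  have h2 : (∑ k, ∑ l, c k l • E l k) = ∑ k, ∑ l, c l k • E k l := Finset.sum_comm
  rw [h1, h2, ← Finset.sum_sub_distrib]
  refine Finset.sum_congr rfl fun k _ => ?_
  rw [← Finset.sum_sub_distrib]
  exact Finset.sum_congr rfl fun l _ => by rw [sub_smul]

lemma sym_sum (c : Fin n → Fin n → ℝ) :
    ∑ k, ∑ l, c k l • (Complex.I • (E k l + E l k))
      = ∑ k, ∑ l, ((c k l + c l k) : ℝ) • (Complex.I • E k l) := by
  have h1 : ∑ k, ∑ l, c k l • (Complex.I • (E k l + E l k))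
      = (∑ k, ∑ l, c k l • (Complex.I • E k l)) + (∑ k, ∑ l, c k l • (Complex.I • E l k)) := by
    simp [smul_add, Finset.sum_add_distrib]
  have h2 : (∑ k, ∑ l, c k l • (Complex.I • E l k))
      = ∑ k, ∑ l, c l k • (Complex.I • E k l) := Finset.sum_comm
  rw [h1, h2, ← Finset.sum_add_distrib]
  refine Finset.sum_congr rfl fun k _ => ?_
  rw [← Finset.sum_add_distrib]
  exact Finset.sum_congr rfl fun l _ => by rw [add_smul]

lemma diagE_sum (c : Fin n → ℝ) :
    ∑ k, ∑ l : Fin n, c k • (Complex.I • (E k k - E l l))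
      = (∑ k, ((n : ℝ) * c k) • (Complex.I • E k k))
        - (∑ k, c k) • (Complex.I • (1 : Matrix (Fin n) (Fin n) ℂ)) := by
  have h1 : ∀ k, ∑ l : Fin n, c k • (Complex.I • (E k k - E l l))
      = ((n : ℝ) * c k) • (Complex.I • E k k) - c k • (Complex.I • (1 : Matrix (Fin n) (Fin n) ℂ)) := by
    intro k
    have : ∑ l : Fin n, c k • (Complex.I • (E k k - E l l))
        = (∑ l : Fin n, c k • (Complex.I • E k k)) - c k • (Complex.I • ∑ l : Fin n, E l l) := by
      rw [Finset.smul_sum, Finset.smul_sum, ← Finset.sum_sub_distrib]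
      exact Finset.sum_congr rfl fun l _ => by rw [smul_sub, smul_sub]
    rw [this, sum_E_diag, Finset.sum_const, Finset.card_univ, Fintype.card_fin,
      ← Nat.cast_smul_eq_nsmul ℝ, smul_smul]
  rw [Finset.sum_congr rfl fun k _ => h1 k, Finset.sum_sub_distrib, ← Finset.sum_smul]

/-- `su(n)` as a real Lie subalgebra of the `n × n` complex matrices. -/
noncomputable def su (n : ℕ) : LieSubalgebra ℝ (Matrix (Fin n) (Fin n) ℂ) where
  carrier := {A | Aᴴ = -A ∧ Matrix.trace A = 0}
  add_mem' := by
    rintro a b ⟨ha1, ha2⟩ ⟨hb1, hb2⟩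
    refine ⟨?_, ?_⟩
    · simp only [conjTranspose_add, ha1, hb1]; abel
    · simp [trace_add, ha2, hb2]
  zero_mem' := by simp
  smul_mem' := by
    rintro r a ⟨ha1, ha2⟩
    refine ⟨?_, ?_⟩
    · rw [conjTranspose_smul, star_trivial, ha1, smul_neg]
    · rw [trace_smul, ha2, smul_zero]
  lie_mem' := by
    rintro a b ⟨ha1, ha2⟩ ⟨hb1, hb2⟩
    rw [Ring.lie_def]
    constructor
    · simp [conjTranspose_mul, ha1, hb1]
    · rw [trace_sub, trace_mul_comm, sub_self]

end XYgenAux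

open XYgenAux in
/-- The real Lie algebra generated by the symmetric hops `i(E_{kl} + E_{lk})`
(for `k < l`) together with one nonconstant traceless diagonal generator
`i·diag(d)` is all of `su(n)`, the traceless skew-Hermitian matrices. -/
theorem xy_generators_generate_su (n : ℕ) (hn : 2 ≤ n)
    (d : Fin n → ℝ) (hsum : ∑ k, d k = 0) (hnc : ∃ i j, d i ≠ d j)
    (𝒢 : Set (Matrix (Fin n) (Fin n) ℂ))
    (h𝒢 : 𝒢 = {A | ∃ k l : Fin n, k < l ∧
        A = Complex.I • (Matrix.single k l 1 + Matrix.single l k 1)} ∪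
      {Complex.I • Matrix.diagonal (fun k => (d k : ℂ))}) :
    (LieSubalgebra.lieSpan ℝ (Matrix (Fin n) (Fin n) ℂ) 𝒢 : Set (Matrix (Fin n) (Fin n) ℂ)) =
      {A : Matrix (Fin n) (Fin n) ℂ | Aᴴ = -A ∧ Matrix.trace A = 0} := by
  have hn0 : (n : ℝ) ≠ 0 := Nat.cast_ne_zero.mpr (by omega)
  set P := LieSubalgebra.lieSpan ℝ (Matrix (Fin n) (Fin n) ℂ) 𝒢 with hPdef
  apply Set.Subset.antisymm
  · -- span ⊆ su
    have hle : P ≤ su n := by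
      rw [LieSubalgebra.lieSpan_le, h𝒢]
      rintro A (⟨k, l, hkl, rfl⟩ | rfl)
      · constructor
        · rw [conjTranspose_smul, conjTranspose_add, conjT_E, conjT_E]
          simp only [Complex.star_def, Complex.conj_I, neg_smul]
          rw [add_comm]
        · rw [trace_smul, trace_add,
            trace_single_eq_of_ne k l 1 hkl.ne,
            trace_single_eq_of_ne l k 1 hkl.ne', add_zero, smul_zero]
      · constructor
        · rw [conjTranspose_smul, diagonal_conjTranspose]
          have h1 : (star fun k => (d k : ℂ)) = fun k => (d k : ℂ) := by
            funext k
            simp [Complex.conj_ofReal]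
          rw [h1]
          simp [Complex.star_def, Complex.conj_I]
        · rw [trace_smul, trace_diagonal]
          have : ∑ k, (d k : ℂ) = 0 := by
            rw [← Complex.ofReal_sum, hsum, Complex.ofReal_zero]
          rw [this, smul_zero]
    exact fun A hA => hle hA
  · rintro A ⟨hA1, hA2⟩
    show A ∈ P
    have hconj : ∀ i j, (starRingEnd ℂ) (A j i) = -(A i j) := by
      intro i j
      have := congrFun (congrFun hA1 i) j
      simpa [conjTranspose_apply] using this
    have hre : ∀ i j, (A j i).re = -(A i j).re := fun i j => by
      have := congrArg Complex.re (hconj i j); simpa using this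
    have him : ∀ i j, (A j i).im = (A i j).im := fun i j => by
      have := congrArg Complex.im (hconj i j)
      simp only [Complex.conj_im, Complex.neg_im, neg_inj] at this
      exact this
    have hre0 : ∀ i, (A i i).re = 0 := fun i => by have := hre i i; linarith
    have htr : ∑ k, (A k k).im = 0 := by
      have := congrArg Complex.im hA2
      simpa [Matrix.trace, Matrix.diag, Complex.im_sum] using this
    have hgen : 𝒢 ⊆ P := LieSubalgebra.subset_lieSpan
    have hDgen : Complex.I • Matrix.diagonal (fun k => (d k : ℂ)) ∈ P :=
      hgen (by rw [h𝒢]; exact Or.inr rfl)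
    have hS : ∀ k l : Fin n, k ≠ l → Complex.I • (E k l + E l k) ∈ P := by
      intro k l hkl
      rcases hkl.lt_or_gt with h | h
      · exact hgen (by rw [h𝒢]; exact Or.inl ⟨k, l, h, rfl⟩)
      · have h2 : Complex.I • (E l k + E k l) ∈ P :=
          hgen (by rw [h𝒢]; exact Or.inl ⟨l, k, h, rfl⟩)
        rwa [add_comm] at h2
    have hA' : ∀ k l : Fin n, k ≠ l → (E k l - E l k) ∈ P := by
      intro k l hkl
      by_cases hd : d k = d l
      · obtain ⟨a, b, hab⟩ := hnc
        obtain ⟨m, hm⟩ : ∃ m, d m ≠ d k := by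
          by_cases h : d a = d k
          · exact ⟨b, by rw [← h]; exact hab.symm⟩
          · exact ⟨a, h⟩
        have hkm : k ≠ m := fun h => hm (by rw [← h])
        have hml : m ≠ l := fun h => hm (by rw [h, ← hd])
        have hb := P.lie_mem (hS k m hkm) (hS m l hml)
        rw [brk_SS hkl hkm hml] at hb
        simpa using neg_mem hb
      · have hb := P.lie_mem hDgen (hS k l hkl)
        rw [brk_d] at hb
        have h2 := P.smul_mem (d l - d k)⁻¹ hb
        rwa [smul_smul, inv_mul_cancel₀ (sub_ne_zero.mpr fun h => hd h.symm),
          one_smul] at h2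
    have hDkl : ∀ k l : Fin n, Complex.I • (E k k - E l l) ∈ P := by
      intro k l
      by_cases hkl : k = l
      · subst hkl; simp only [sub_self, smul_zero]; exact P.zero_mem
      · have hb := P.lie_mem (hA' k l hkl) (hS k l hkl)
        rw [brk_AS hkl] at hb
        have h2 := P.smul_mem (2:ℝ)⁻¹ hb
        rwa [smul_smul, inv_mul_cancel₀ (by norm_num), one_smul] at h2
    have key : A = (∑ k, ∑ l, (if k < l then (A k l).re else 0) • (E k l - E l k))
        + (∑ k, ∑ l, (if k < l then (A k l).im else 0) • (Complex.I • (E k l + E l k)))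
        + (∑ k, ∑ l, ((A k k).im / n) • (Complex.I • (E k k - E l l))) := by
      rw [skew_sum, sym_sum, diagE_sum]
      have hz : (∑ k : Fin n, (A k k).im / n) = 0 := by
        rw [← Finset.sum_div, htr, zero_div]
      rw [hz, zero_smul, sub_zero]
      have hd2 : ∀ k : Fin n, ((n:ℝ) * ((A k k).im / n)) = (A k k).im := fun k => by
        field_simp
      simp only [hd2]
      have h3 : (∑ k, ((A k k).im) • (Complex.I • E k k))
          = ∑ k, ∑ l, (if l = k then ((A k k).im) • (Complex.I • E k k) else 0) := by
        refine Finset.sum_congr rfl fun k _ => ?_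
        rw [Finset.sum_ite_eq' Finset.univ k, if_pos (Finset.mem_univ k)]
      rw [h3, ← Finset.sum_add_distrib, ← Finset.sum_add_distrib]
      nth_rewrite 1 [matrix_eq_sum_single A]
      refine Finset.sum_congr rfl fun k _ => ?_
      rw [← Finset.sum_add_distrib, ← Finset.sum_add_distrib]
      refine Finset.sum_congr rfl fun l _ => ?_
      rcases lt_trichotomy k l with h | h | h
      · rw [if_pos h, if_neg (asymm h), if_pos h, if_neg (asymm h),
          if_neg (ne_of_gt h : l ≠ k)]
        rw [sub_zero, add_zero, add_zero, real_smul_mat, real_smul_mat,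
          smul_single, smul_single, smul_single,
          ← single_add]
        refine congrArg _ ?_
        apply Complex.ext <;> simp
      · subst h
        rw [if_neg (lt_irrefl k), if_neg (lt_irrefl k), if_pos rfl]
        rw [sub_zero, add_zero, zero_smul, zero_smul, zero_add, zero_add,
          smul_single, smul_single]
        refine congrArg _ ?_
        apply Complex.ext <;> simp [hre0 k]
      · rw [if_neg (asymm h), if_pos h, if_neg (asymm h), if_pos h,
          if_neg (ne_of_lt h : l ≠ k)]
        rw [zero_sub, zero_add, add_zero, real_smul_mat, real_smul_mat,
          smul_single, smul_single, smul_single,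
          ← single_add]
        refine congrArg _ ?_
        apply Complex.ext <;> simp [hre l k, him l k]
    rw [key]
    refine P.add_mem (P.add_mem ?_ ?_) ?_
    · refine sum_mem fun k _ => sum_mem fun l _ => ?_
      by_cases h : k < l
      · exact P.smul_mem _ (hA' k l h.ne)
      · rw [if_neg h, zero_smul]; exact P.zero_mem
    · refine sum_mem fun k _ => sum_mem fun l _ => ?_
      by_cases h : k < l
      · exact P.smul_mem _ (hS k l h.ne)
      · rw [if_neg h, zero_smul]; exact P.zero_mem
    · exact sum_mem fun k _ => sum_mem fun l _ => P.smul_mem _ (hDkl k l)
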